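/- arXiv:0907.1980 — 3 statements merged into one kernel-verified Lean document; each statement's English description precedes it below -/
import Mathlib

section
/- The closure of the strict structured ε-pseudospectrum equals the structured ε-pseudospectrum: closure(Λ'_{S,ε}(A)) = Λ_{S,ε}(A). -/
open Matrix Polynomial Set Topology Filter

noncomputable def MS {n : ℕ} (S : Finset (Fin n × Fin n))
    (z : EuclideanSpace ℂ {p : Fin n × Fin n // p ∈ S}) : Matrix (Fin n) (Fin n) ℂ :=
  fun i j => if h : (i, j) ∈ S then z ⟨(i, j), h⟩ else 0

/-- The structured ε-pseudospectrum `Λ_{S,ε}(A)`. -/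
noncomputable def structPseudo {n : ℕ} (A : Matrix (Fin n) (Fin n) ℂ)
    (S : Finset (Fin n × Fin n)) (ε : ℝ) : Set ℂ :=
  ⋃ z ∈ {z : EuclideanSpace ℂ {p : Fin n × Fin n // p ∈ S} | ‖z‖ ≤ ε},
    spectrum ℂ (A + MS S z)

/-- The strict structured ε-pseudospectrum `Λ'_{S,ε}(A)`. -/
noncomputable def structPseudoStrict {n : ℕ} (A : Matrix (Fin n) (Fin n) ℂ)
    (S : Finset (Fin n × Fin n)) (ε : ℝ) : Set ℂ :=
  ⋃ z ∈ {z : EuclideanSpace ℂ {p : Fin n × Fin n // p ∈ S} | ‖z‖ < ε},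
    spectrum ℂ (A + MS S z)

lemma pow_card_le_prod_real {d : ℝ} (hd : 0 ≤ d) (m : Multiset ℝ)
    (h : ∀ x ∈ m, d ≤ x) : d ^ Multiset.card m ≤ m.prod := by
  induction m using Multiset.induction_on with
  | empty => simp
  | cons a s ih =>
    simp only [Multiset.card_cons, Multiset.prod_cons, pow_succ]
    have ha := h a (Multiset.mem_cons_self a s)
    have hs := ih (fun x hx => h x (Multiset.mem_cons_of_mem hx))
    calc d ^ Multiset.card s * d = d * d ^ Multiset.card s := mul_comm _ _
      _ ≤ a * s.prod :=
        mul_le_mul ha hs (pow_nonneg hd _) (le_trans hd ha)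

lemma MS_smul {n : ℕ} (S : Finset (Fin n × Fin n)) (c : ℂ)
    (z : EuclideanSpace ℂ {p : Fin n × Fin n // p ∈ S}) :
    MS S (c • z) = c • MS S z := by
  ext i j
  simp only [MS, Matrix.smul_apply]
  split <;> simp

lemma continuous_MS {n : ℕ} (S : Finset (Fin n × Fin n)) :
    Continuous (MS S) := by
  apply continuous_matrix
  intro i j
  by_cases h : (i, j) ∈ S
  · simp only [MS, h, dif_pos]
    exact (EuclideanSpace.proj (⟨(i,j), h⟩ : {p : Fin n × Fin n // p ∈ S})).continuous
  · simp only [MS, h, dif_neg, not_false_iff]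
    exact continuous_const

lemma mem_spectrum_iff_det {n : ℕ} (M : Matrix (Fin n) (Fin n) ℂ) (μ : ℂ) :
    μ ∈ spectrum ℂ M ↔ (μ • (1 : Matrix (Fin n) (Fin n) ℂ) - M).det = 0 := by
  rw [spectrum.mem_iff, Algebra.algebraMap_eq_smul_one, Matrix.isUnit_iff_isUnit_det,
    isUnit_iff_ne_zero, not_not]

lemma charpoly_eval' {n : ℕ} (M : Matrix (Fin n) (Fin n) ℂ) (μ : ℂ) :
    M.charpoly.eval μ = (μ • (1 : Matrix (Fin n) (Fin n) ℂ) - M).det := by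
  rw [Matrix.charpoly, eval_det, Matrix.matPolyEquiv_charmatrix]
  simp [smul_eq_diagonal_mul]


/-- The closure of the strict structured ε-pseudospectrum equals the structured
ε-pseudospectrum. -/
theorem closure_structPseudoStrict {n : ℕ} (A : Matrix (Fin n) (Fin n) ℂ)
    (S : Finset (Fin n × Fin n)) (ε : ℝ) (hε : 0 < ε) :
    closure (structPseudoStrict A S ε) = structPseudo A S ε := by
  apply Subset.antisymm
  · -- closure of the strict set is contained in the closed one
    have hsub : structPseudoStrict A S ε ⊆ structPseudo A S ε := by
      intro μ hμ
      simp only [structPseudoStrict, structPseudo, mem_iUnion, mem_setOf_eq] at hμ ⊢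
      obtain ⟨z, hz, hμ⟩ := hμ
      exact ⟨z, le_of_lt hz, hμ⟩
    have hclosed : IsClosed (structPseudo A S ε) := by
      apply IsSeqClosed.isClosed
      intro x l hx hl
      simp only [structPseudo, mem_iUnion, mem_setOf_eq] at hx ⊢
      choose zf hz1 hz2 using hx
      obtain ⟨z, hzball, φ, hmono, hφ⟩ :=
        (isCompact_closedBall (0 : EuclideanSpace ℂ {p : Fin n × Fin n // p ∈ S}) ε).tendsto_subseq
          (fun k => Metric.mem_closedBall.mpr (by simpa using hz1 k))
      refine ⟨z, by simpa using hzball, ?_⟩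
      rw [mem_spectrum_iff_det]
      have hcont : Continuous fun p : (EuclideanSpace ℂ {p : Fin n × Fin n // p ∈ S}) × ℂ =>
          (p.2 • (1 : Matrix (Fin n) (Fin n) ℂ) - (A + MS S p.1)).det := by
        apply Continuous.matrix_det
        exact (continuous_snd.smul continuous_const).sub
          (continuous_const.add ((continuous_MS S).comp continuous_fst))
      have hten : Filter.Tendsto (fun k => (zf (φ k), x (φ k))) Filter.atTop (𝓝 (z, l)) :=
        hφ.prodMk_nhds (hl.comp hmono.tendsto_atTop)
      have h0 : ∀ k, (x (φ k) • (1 : Matrix (Fin n) (Fin n) ℂ) - (A + MS S (zf (φ k)))).det = 0 :=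
        fun k => (mem_spectrum_iff_det _ _).mp (hz2 (φ k))
      have := (hcont.tendsto (z, l)).comp hten
      have : Filter.Tendsto (fun k =>
          (x (φ k) • (1 : Matrix (Fin n) (Fin n) ℂ) - (A + MS S (zf (φ k)))).det)
          Filter.atTop (𝓝 ((l • (1 : Matrix (Fin n) (Fin n) ℂ) - (A + MS S z)).det)) := this
      have hfin : (0 : ℂ) = (l • (1 : Matrix (Fin n) (Fin n) ℂ) - (A + MS S z)).det := by
        simpa [h0] using this
      exact hfin.symm
    exact closure_minimal hsub hclosed
  · intro μ hμ
    simp only [structPseudo, mem_iUnion, mem_setOf_eq] at hμ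
    obtain ⟨z, hz, hspec⟩ := hμ
    rw [Metric.mem_closure_iff]
    intro δ hδ
    -- consider the path t ↦ A + MS S (t • z)
    set f : ℝ → ℂ := fun t =>
      (μ • (1 : Matrix (Fin n) (Fin n) ℂ) - (A + MS S ((t : ℂ) • z))).det with hf_def
    have hf_cont : Continuous f := by
      apply Continuous.matrix_det
      apply Continuous.sub continuous_const
      apply Continuous.add continuous_const
      have : (fun t : ℝ => MS S ((t : ℂ) • z)) = fun t : ℝ => (t : ℂ) • MS S z := by
        funext t; exact MS_smul S _ z
      rw [this]
      exact (Complex.continuous_ofReal).smul continuous_const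
    have hf1 : f 1 = 0 := by
      have := (mem_spectrum_iff_det (A + MS S z) μ).mp hspec
      simpa [hf_def] using this
    have hft : Filter.Tendsto (fun t => ‖f t‖) (𝓝[Ioo (0:ℝ) 1] 1) (𝓝 0) := by
      have h1 : Filter.Tendsto f (𝓝[Ioo (0:ℝ) 1] 1) (𝓝 (f 1)) :=
        (hf_cont.tendsto 1).mono_left nhdsWithin_le_nhds
      have := h1.norm
      rwa [hf1, norm_zero] at this
    haveI : (𝓝[Ioo (0:ℝ) 1] 1).NeBot := right_nhdsWithin_Ioo_neBot zero_lt_one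
    have hη : (0:ℝ) < δ ^ n := pow_pos hδ n
    have hev : ∀ᶠ t in 𝓝[Ioo (0:ℝ) 1] 1, ‖f t‖ < δ ^ n :=
      hft.eventually (Filter.Tendsto.eventually_lt_const hη tendsto_id) |>.mono (fun t ht => ht)
    obtain ⟨t, htIoo, htf⟩ := (eventually_mem_nhdsWithin.and hev).exists
    -- the perturbed matrix
    set B := A + MS S ((t : ℂ) • z) with hB_def
    have hnorm : ‖(t : ℂ) • z‖ < ε := by
      rw [norm_smul, Complex.norm_real, Real.norm_eq_abs, abs_of_pos htIoo.1]
      calc t * ‖z‖ ≤ t * ε := by nlinarith [htIoo.1]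
        _ < ε := by nlinarith [htIoo.2]
    set p := B.charpoly with hp_def
    have hmonic : p.Monic := Matrix.charpoly_monic B
    have hsplits : p.Splits := IsAlgClosed.splits p
    have hcard : Multiset.card p.roots = n := by
      rw [(Polynomial.splits_iff_card_roots).mp hsplits, Matrix.charpoly_natDegree_eq_dim,
        Fintype.card_fin]
    have heval : p.eval μ = f t := by
      rw [hp_def, charpoly_eval']
    have habs : (normHom : ℂ →*₀ ℝ) (p.eval μ) < δ ^ n := by
      rw [heval]; exact htf
    -- find a root close to μ
    by_contra hcon
    push_neg at hcon
    have hall : ∀ r ∈ p.roots, δ ≤ (normHom : ℂ →*₀ ℝ) (μ - r) := by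
      intro r hr
      have hr_spec : r ∈ spectrum ℂ B := by
        rw [mem_spectrum_iff_det, ← charpoly_eval']
        exact (Polynomial.isRoot_of_mem_roots hr)
      have hr_mem : r ∈ structPseudoStrict A S ε := by
        simp only [structPseudoStrict, mem_iUnion, mem_setOf_eq]
        exact ⟨(t : ℂ) • z, hnorm, hr_spec⟩
      have := hcon r hr_mem
      rwa [Complex.dist_eq] at this
    have hprod : p.eval μ = ((p.roots.map fun a => μ - a)).prod := by
      conv_lhs => rw [hsplits.eq_prod_roots_of_monic hmonic]
      rw [Polynomial.eval_multiset_prod, Multiset.map_map]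
      simp
    have hge : δ ^ n ≤ (normHom : ℂ →*₀ ℝ) (p.eval μ) := by
      rw [hprod, map_multiset_prod, Multiset.map_map]
      have hcard2 : Multiset.card ((p.roots.map fun a => μ - a).map (normHom : ℂ →*₀ ℝ)) = n := by
        simp [hcard]
      rw [Multiset.map_map] at hcard2
      calc δ ^ n = δ ^ Multiset.card (p.roots.map ((normHom : ℂ →*₀ ℝ) ∘ fun a => μ - a)) := by
            rw [hcard2]
        _ ≤ (p.roots.map ((normHom : ℂ →*₀ ℝ) ∘ fun a => μ - a)).prod := by
            apply pow_card_le_prod_real (le_of_lt hδ)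
            intro x hx
            obtain ⟨r, hr, rfl⟩ := Multiset.mem_map.mp hx
            exact hall r hr
    linarith
end

section
/- Let f be a monic complex polynomial of degree n, and for 0 ≤ k ≤ n+1 let d_k := deg gcd(f, f', …, f^{(k)}) with d₀ := n. Then for 1 ≤ k ≤ n, the number ρ_k of distinct roots of f of multiplicity exactly k satisfies ρ_k = d_{k−1} − 2 d_k + d_{k+1}. -/
open Polynomial

/-- `gcdDerivs f k` is the monic-normalized gcd of `f, f′, …, f^{(k)}`. -/
noncomputable def gcdDerivs (f : Polynomial ℂ) : ℕ → Polynomial ℂ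
  | 0 => f
  | (k+1) => EuclideanDomain.gcd (gcdDerivs f k) (Polynomial.derivative^[k+1] f)

lemma rm_le_of_dvd {p q : Polynomial ℂ} (hq : q ≠ 0) (h : p ∣ q) (α : ℂ) :
    rootMultiplicity α p ≤ rootMultiplicity α q :=
  (le_rootMultiplicity_iff hq).2 ((pow_rootMultiplicity_dvd p α).trans h)

lemma rm_le_natDegree {f : Polynomial ℂ} (hf : f ≠ 0) (α : ℂ) :
    rootMultiplicity α f ≤ f.natDegree := by
  have := Polynomial.natDegree_le_of_dvd (pow_rootMultiplicity_dvd f α) hf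
  simpa [Polynomial.natDegree_pow] using this

/-- multiplicity drops by exactly one under derivative, iterated. -/
lemma rm_iterate {f : Polynomial ℂ} (hf : f ≠ 0) (α : ℂ) :
    ∀ j, j ≤ rootMultiplicity α f →
      rootMultiplicity α (Polynomial.derivative^[j] f) = rootMultiplicity α f - j := by
  intro j
  induction j with
  | zero => simp
  | succ j ih =>
    intro hj
    have hj' : j ≤ rootMultiplicity α f := by omega
    have ihj := ih hj'
    have hne : Polynomial.derivative^[j] f ≠ 0 := by
      intro h0
      rw [h0, Polynomial.rootMultiplicity_zero] at ihj
      omega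
    have hroot : (Polynomial.derivative^[j] f).IsRoot α := by
      refine (Polynomial.rootMultiplicity_pos hne).1 ?_
      omega
    rw [Function.iterate_succ_apply',
      Polynomial.derivative_rootMultiplicity_of_root hroot, ihj]
    omega

/-- nonvanishing of iterated derivatives up to the degree. -/
lemma iterate_derivative_ne_zero {f : Polynomial ℂ} (hf : f ≠ 0) :
    ∀ j, j ≤ f.natDegree → Polynomial.derivative^[j] f ≠ 0 := by
  suffices h : ∀ j, j ≤ f.natDegree →
      Polynomial.derivative^[j] f ≠ 0 ∧
        (Polynomial.derivative^[j] f).natDegree = f.natDegree - j by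
    exact fun j hj => (h j hj).1
  intro j
  induction j with
  | zero => simp [hf]
  | succ j ih =>
    intro hj
    obtain ⟨h1, h2⟩ := ih (by omega)
    have hdpos : (Polynomial.derivative^[j] f).natDegree ≠ 0 := by omega
    have hlt := Polynomial.natDegree_derivative_lt (p := Polynomial.derivative^[j] f) hdpos
    have hdeq : (Polynomial.derivative (Polynomial.derivative^[j] f)).natDegree
        = (Polynomial.derivative^[j] f).natDegree - 1 :=
      Polynomial.natDegree_eq_of_degree_eq_some
        (Polynomial.degree_derivative_eq _ (Nat.pos_of_ne_zero hdpos))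
    constructor
    · rw [Function.iterate_succ_apply']
      intro h0
      exact hdpos (Polynomial.natDegree_eq_zero_of_derivative_eq_zero h0)
    · rw [Function.iterate_succ_apply', hdeq]
      omega

lemma gcdDerivs_ne_zero_dvd (f : Polynomial ℂ) (hf : f ≠ 0) (k : ℕ) :
    gcdDerivs f k ≠ 0 ∧ gcdDerivs f k ∣ f := by
  induction k with
  | zero => exact ⟨hf, dvd_rfl⟩
  | succ k ih =>
    constructor
    · show EuclideanDomain.gcd (gcdDerivs f k) (Polynomial.derivative^[k+1] f) ≠ 0
      intro h
      exact ih.1 (EuclideanDomain.gcd_eq_zero_iff.1 h).1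
    · exact dvd_trans (EuclideanDomain.gcd_dvd_left _ _) ih.2

lemma gcdDerivs_rootMultiplicity (f : Polynomial ℂ) (hf : f ≠ 0) (α : ℂ) (hα : f.IsRoot α)
    (k : ℕ) :
    rootMultiplicity α (gcdDerivs f k) = rootMultiplicity α f - k := by
  induction k with
  | zero => simp [gcdDerivs]
  | succ k ih =>
    set m := rootMultiplicity α f with hm
    have hg : gcdDerivs f k ≠ 0 := (gcdDerivs_ne_zero_dvd f hf k).1
    show rootMultiplicity α (EuclideanDomain.gcd (gcdDerivs f k)
      (Polynomial.derivative^[k+1] f)) = m - (k+1)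
    by_cases hh : Polynomial.derivative^[k+1] f = 0
    · rw [hh, EuclideanDomain.gcd_zero_right, ih]
      have hmn : m ≤ f.natDegree := rm_le_natDegree hf α
      have : f.natDegree < k + 1 := by
        by_contra hcon
        exact iterate_derivative_ne_zero hf (k+1) (by omega) hh
      omega
    · have hgcd_ne : EuclideanDomain.gcd (gcdDerivs f k) (Polynomial.derivative^[k+1] f) ≠ 0 := by
        intro h
        exact hg (EuclideanDomain.gcd_eq_zero_iff.1 h).1
      apply le_antisymm
      · by_cases hkm : k + 1 ≤ m
        · have hrm := rm_iterate hf α (k+1) hkm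
          have := rm_le_of_dvd hh (EuclideanDomain.gcd_dvd_right (gcdDerivs f k)
            (Polynomial.derivative^[k+1] f)) α
          omega
        · have := rm_le_of_dvd hg (EuclideanDomain.gcd_dvd_left (gcdDerivs f k)
            (Polynomial.derivative^[k+1] f)) α
          omega
      · rw [le_rootMultiplicity_iff hgcd_ne]
        apply EuclideanDomain.dvd_gcd
        · calc (X - C α) ^ (m - (k+1)) ∣ (X - C α) ^ (m - k) :=
                pow_dvd_pow _ (by omega)
            _ ∣ gcdDerivs f k := by rw [← ih]; exact pow_rootMultiplicity_dvd _ _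
        · by_cases hkm : k + 1 ≤ m
          · have hrm := rm_iterate hf α (k+1) hkm
            rw [show m - (k+1) = rootMultiplicity α (Polynomial.derivative^[k+1] f) from hrm.symm]
            exact pow_rootMultiplicity_dvd _ _
          · rw [show m - (k+1) = 0 by omega, pow_zero]
            exact one_dvd _

lemma natDegree_eq_sum_rm {f g : Polynomial ℂ} (hf : f ≠ 0) (hg : g ≠ 0) (hdvd : g ∣ f) :
    g.natDegree = ∑ α ∈ f.roots.toFinset, rootMultiplicity α g := by
  classical
  have hsplits : g.Splits := IsAlgClosed.splits g
  have h1 : g.natDegree = Multiset.card g.roots :=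
    ((Polynomial.splits_iff_card_roots).1 hsplits).symm
  rw [h1, ← Multiset.toFinset_sum_count_eq g.roots]
  have hsub : g.roots.toFinset ⊆ f.roots.toFinset := by
    intro α hα
    rw [Multiset.mem_toFinset, Polynomial.mem_roots hg] at hα
    rw [Multiset.mem_toFinset, Polynomial.mem_roots hf]
    exact hα.dvd hdvd
  rw [Finset.sum_subset hsub (fun α _ hα => Multiset.count_eq_zero_of_notMem
    (fun h => hα (Multiset.mem_toFinset.2 h)))]
  exact Finset.sum_congr rfl fun α _ => Polynomial.count_roots g

/-- With `d_k := deg gcd(f, f′, …, f^{(k)})`, the number `ρ_k` of distinct roots of `f` of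
multiplicity exactly `k` satisfies `ρ_k = d_{k-1} - 2 d_k + d_{k+1}` for `1 ≤ k ≤ n`. -/
theorem card_roots_multiplicity_eq {n : ℕ} (hn : 1 ≤ n) (f : Polynomial ℂ) (hf : f.Monic)
    (hdeg : f.natDegree = n) :
    ∀ k, 1 ≤ k → k ≤ n →
      ((f.roots.toFinset.filter (fun α => f.rootMultiplicity α = k)).card : ℤ) =
        ((gcdDerivs f (k - 1)).natDegree : ℤ) - 2 * ((gcdDerivs f k).natDegree : ℤ) +
          ((gcdDerivs f (k + 1)).natDegree : ℤ) := by
  classical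
  intro k hk1 hkn
  have hf0 : f ≠ 0 := hf.ne_zero
  have hd : ∀ j, (gcdDerivs f j).natDegree
      = ∑ α ∈ f.roots.toFinset, (f.rootMultiplicity α - j) := by
    intro j
    obtain ⟨hne, hdvd⟩ := gcdDerivs_ne_zero_dvd f hf0 j
    rw [natDegree_eq_sum_rm hf0 hne hdvd]
    refine Finset.sum_congr rfl fun α hα => ?_
    rw [Multiset.mem_toFinset, Polynomial.mem_roots hf0] at hα
    exact gcdDerivs_rootMultiplicity f hf0 α hα j
  rw [Finset.card_filter, hd, hd, hd, Nat.cast_sum, Nat.cast_sum, Nat.cast_sum, Nat.cast_sum,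
    Finset.mul_sum, ← Finset.sum_sub_distrib, ← Finset.sum_add_distrib]
  refine Finset.sum_congr rfl fun α hα => ?_
  rw [Multiset.mem_toFinset, Polynomial.mem_roots hf0] at hα
  have hm1 : 1 ≤ f.rootMultiplicity α := (Polynomial.rootMultiplicity_pos hf0).2 hα
  split_ifs with h <;> omega
end

section
/- Let E be a topological space, 𝒜 : E → ℂ^{n×n} a continuous matrix function, t₀ ∈ E, and α₁,…,α_p the distinct eigenvalues of 𝒜(t₀). Let 0 < η < min_{i≠j} |αᵢ − αⱼ|/2. Then there is a neighborhood V of t₀ such that for all t ∈ V: (1) spectrum(𝒜(t)) ⊆ B(α₁,η) ∪ ⋯ ∪ B(α_p,η), and (2) for each k, the sum of the algebraic multiplicities of the eigenvalues of 𝒜(t) in B(α_k,η) equals the algebraic multiplicity of α_k as an eigenvalue of 𝒜(t₀). -/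
open scoped Classical
open Matrix Polynomial

section Aux

variable {n : ℕ}

lemma eval_charpoly' (M : Matrix (Fin n) (Fin n) ℂ) (z : ℂ) :
    (M.charpoly).eval z = (Matrix.scalar (Fin n) z - M).det := by
  rw [Matrix.charpoly, eval_det, matPolyEquiv_charmatrix]
  simp

lemma spectrum_eq_isRoot (M : Matrix (Fin n) (Fin n) ℂ) :
    spectrum ℂ M = {z | M.charpoly.IsRoot z} := by
  ext z
  rw [spectrum.mem_iff, Set.mem_setOf_eq, Polynomial.IsRoot, eval_charpoly',
    Matrix.isUnit_iff_isUnit_det, isUnit_iff_ne_zero]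
  simp only [not_not]
  rw [Matrix.algebraMap_eq_diagonal, Matrix.scalar_apply]
  simp [Pi.algebraMap_def, Algebra.algebraMap_self_apply]

lemma root_bound (M : Matrix (Fin n) (Fin n) ℂ) {μ : ℂ} (h : M.charpoly.IsRoot μ) :
    ‖μ‖ ≤ ∑ i : Fin n, ∑ j : Fin n, ‖M i j‖ := by
  have hs : μ ∈ spectrum ℂ M := by rw [spectrum_eq_isRoot]; exact h
  have hs' : μ ∈ spectrum ℂ (Matrix.toLin' M) := by
    rw [show Matrix.toLin' M = Matrix.toLinAlgEquiv' M from rfl, AlgEquiv.spectrum_eq]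
    exact hs
  have he : Module.End.HasEigenvalue (Matrix.toLin' M) μ :=
    (Module.End.hasEigenvalue_iff_mem_spectrum).2 hs'
  obtain ⟨k, hk⟩ := eigenvalue_mem_ball he
  have h1 : ‖μ‖ ≤ ‖M k k‖ + ∑ j ∈ Finset.univ.erase k, ‖M k j‖ := by
    have := Metric.mem_closedBall.1 hk
    calc ‖μ‖ ≤ ‖M k k‖ + dist μ (M k k) := by
          rw [dist_eq_norm]
          linarith [norm_sub_norm_le μ (M k k)]
      _ ≤ ‖M k k‖ + ∑ j ∈ Finset.univ.erase k, ‖M k j‖ := by linarith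
  have h2 : ‖M k k‖ + ∑ j ∈ Finset.univ.erase k, ‖M k j‖ = ∑ j : Fin n, ‖M k j‖ :=
    Finset.add_sum_erase _ (fun j => ‖M k j‖) (Finset.mem_univ k)
  have h3 : ∑ j : Fin n, ‖M k j‖ ≤ ∑ i : Fin n, ∑ j : Fin n, ‖M i j‖ :=
    Finset.single_le_sum (f := fun i => ∑ j : Fin n, ‖M i j‖)
      (fun i _ => Finset.sum_nonneg fun j _ => norm_nonneg _) (Finset.mem_univ k)
  linarith

lemma multiset_exists_fn {α : Type*} {m : ℕ} (s : Multiset α) (h : Multiset.card s = m) :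
    ∃ f : Fin m → α, s = Multiset.map f Finset.univ.val := by
  subst h
  refine ⟨fun i => s.toList.get (Fin.cast (s.length_toList).symm i), ?_⟩
  rw [Fin.univ_val_map, ← Multiset.coe_toList s]
  congr 1
  apply List.ext_get
  · simp
  · intro i h1 h2
    simp [List.get_ofFn]
    rfl

lemma sum_count_filter' (s : Multiset ℂ) (q : ℂ → Prop) [DecidablePred q] :
    ∑ a ∈ s.toFinset.filter q, s.count a = Multiset.card (s.filter q) := by
  rw [← Multiset.toFinset_sum_count_eq (s.filter q), Multiset.toFinset_filter]
  apply Finset.sum_congr rfl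
  intro a ha
  rw [Multiset.count_filter, if_pos (Finset.mem_filter.mp ha).2]

lemma charpoly_card_roots (M : Matrix (Fin n) (Fin n) ℂ) :
    Multiset.card M.charpoly.roots = n := by
  have := Polynomial.splits_iff_card_roots.mp (IsAlgClosed.splits M.charpoly)
  rw [this, M.charpoly_natDegree_eq_dim, Fintype.card_fin]

lemma charpoly_eq_prod (M : Matrix (Fin n) (Fin n) ℂ) (f : Fin n → ℂ)
    (hf : M.charpoly.roots = Multiset.map f Finset.univ.val) :
    M.charpoly = ∏ i : Fin n, (X - Polynomial.C (f i)) := by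
  have h1 := prod_multiset_X_sub_C_of_monic_of_roots_card_eq (M.charpoly_monic)
    (by rw [charpoly_card_roots, M.charpoly_natDegree_eq_dim, Fintype.card_fin])
  rw [← h1, hf, Multiset.map_map]
  rfl

lemma key {p : ℕ} (M₀ : Matrix (Fin n) (Fin n) ℂ) (α : Fin p → ℂ)
    (hinj : Function.Injective α)
    (hspec : spectrum ℂ M₀ = Set.range α) (η : ℝ) (hη : 0 < η)
    (hη' : ∀ i j : Fin p, i ≠ j → η < ‖α i - α j‖ / 2) :
    ∀ᶠ M in nhds M₀,
      (spectrum ℂ M ⊆ ⋃ k : Fin p, Metric.ball (α k) η) ∧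
      ∀ k : Fin p,
        ∑ μ ∈ M.charpoly.roots.toFinset.filter (fun μ => μ ∈ Metric.ball (α k) η),
          M.charpoly.rootMultiplicity μ = M₀.charpoly.rootMultiplicity (α k) := by
  haveI : FirstCountableTopology (Matrix (Fin n) (Fin n) ℂ) :=
    inferInstanceAs (FirstCountableTopology (Fin n → Fin n → ℂ))
  by_contra hcon
  rw [Filter.not_eventually] at hcon
  obtain ⟨x, hx_tendsto, hx⟩ := Filter.exists_seq_forall_of_frequently hcon
  -- root enumerations
  choose r hr using fun j => multiset_exists_fn ((x j).charpoly.roots) (charpoly_card_roots (x j))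
  have hroot : ∀ j i, (x j).charpoly.IsRoot (r j i) := by
    intro j i
    have hmem : r j i ∈ (x j).charpoly.roots := by
      rw [hr j]
      exact Multiset.mem_map.2 ⟨i, Finset.mem_univ_val i, rfl⟩
    exact Polynomial.isRoot_of_mem_roots hmem
  -- bound on roots
  set b : Matrix (Fin n) (Fin n) ℂ → ℝ := fun M => ∑ i : Fin n, ∑ j : Fin n, ‖M i j‖ with hb_def
  have hb_cont : Continuous b := by
    apply continuous_finset_sum
    intro i _
    apply continuous_finset_sum
    intro j _
    exact ((continuous_apply_apply i j).norm)
  have hbt : Filter.Tendsto (fun j => b (x j)) Filter.atTop (nhds (b M₀)) :=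
    (hb_cont.tendsto M₀).comp hx_tendsto
  obtain ⟨C, hC⟩ := hbt.bddAbove_range
  have hrball : ∀ j, r j ∈ Set.univ.pi (fun _ : Fin n => Metric.closedBall (0 : ℂ) C) := by
    intro j i _
    rw [Metric.mem_closedBall, dist_zero_right]
    exact (root_bound (x j) (hroot j i)).trans (hC ⟨j, rfl⟩)
  have hcomp : IsCompact (Set.univ.pi fun _ : Fin n => Metric.closedBall (0 : ℂ) C) :=
    isCompact_univ_pi fun _ => isCompact_closedBall _ _
  obtain ⟨rL, -, φ, hφ, hrφ⟩ := hcomp.tendsto_subseq hrball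
  -- identify the limit polynomial
  have hqeq : M₀.charpoly = ∏ i : Fin n, (X - Polynomial.C (rL i)) := by
    apply Polynomial.funext
    intro z
    have h1 : Filter.Tendsto (fun j => ∏ i : Fin n, (z - r (φ j) i)) Filter.atTop
        (nhds (∏ i : Fin n, (z - rL i))) :=
      tendsto_finset_prod _ fun i _ =>
        tendsto_const_nhds.sub ((tendsto_pi_nhds.mp hrφ) i)
    have h2 : ∀ j, ∏ i : Fin n, (z - r j i) = ((x j).charpoly).eval z := by
      intro j
      rw [charpoly_eq_prod (x j) (r j) (hr j)]
      simp [Polynomial.eval_prod]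
    have h3 : Filter.Tendsto (fun j => ((x (φ j)).charpoly).eval z) Filter.atTop
        (nhds ((M₀.charpoly).eval z)) := by
      simp only [eval_charpoly']
      exact (((continuous_const.sub continuous_id).matrix_det).tendsto M₀).comp
        (hx_tendsto.comp hφ.tendsto_atTop)
    have h4 : Filter.Tendsto (fun j => ((x (φ j)).charpoly).eval z) Filter.atTop
        (nhds (∏ i : Fin n, (z - rL i))) := by
      refine h1.congr fun j => h2 (φ j)
    have := tendsto_nhds_unique h4 h3
    rw [Polynomial.eval_prod]
    simp only [Polynomial.eval_sub, Polynomial.eval_X, Polynomial.eval_C]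
    exact this.symm
  have hproots : M₀.charpoly.roots = Multiset.map rL Finset.univ.val := by
    rw [hqeq, show (∏ i : Fin n, (X - Polynomial.C (rL i)))
        = ((Multiset.map rL Finset.univ.val).map (fun a => X - Polynomial.C a)).prod by
      rw [Multiset.map_map]; rfl]
    exact roots_multiset_prod_X_sub_C _
  -- each limit root is an eigenvalue of M₀
  have hκ' : ∀ i : Fin n, ∃ k : Fin p, α k = rL i := by
    intro i
    have hmem : rL i ∈ M₀.charpoly.roots := by
      rw [hproots]; exact Multiset.mem_map.2 ⟨i, Finset.mem_univ_val i, rfl⟩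
    have : rL i ∈ spectrum ℂ M₀ := by
      rw [spectrum_eq_isRoot]
      exact Polynomial.isRoot_of_mem_roots hmem
    rw [hspec] at this
    exact this
  choose κ hκ using hκ'
  -- pick a far index
  have hev : ∀ᶠ j in Filter.atTop, ∀ i : Fin n, dist (r (φ j) i) (rL i) < η := by
    rw [Filter.eventually_all]
    intro i
    exact Metric.tendsto_nhds.mp ((tendsto_pi_nhds.mp hrφ) i) η hη
  obtain ⟨J, hJ⟩ := hev.exists
  apply hx (φ J)
  set M := x (φ J) with hM
  set rr := r (φ J) with hrr
  have hballiff : ∀ (i : Fin n) (k : Fin p), rr i ∈ Metric.ball (α k) η ↔ κ i = k := by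
    intro i k
    constructor
    · intro hb
      by_contra hne
      have h2η : η < ‖α k - α (κ i)‖ / 2 := hη' k (κ i) (fun hkk => hne hkk.symm)
      have hd1 : dist (α k) (rr i) < η := by
        rw [dist_comm]; exact Metric.mem_ball.mp hb
      have hd2 : dist (rr i) (α (κ i)) < η := by
        rw [hκ i]; exact hJ i
      have : dist (α k) (α (κ i)) < 2 * η := by
        have := dist_triangle (α k) (rr i) (α (κ i))
        linarith
      rw [Complex.dist_eq] at this
      linarith
    · intro hk
      subst hk
      rw [Metric.mem_ball, hκ i]
      exact hJ i
  constructor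
  · -- spectrum inclusion
    intro z hz
    rw [spectrum_eq_isRoot] at hz
    have hmem : z ∈ M.charpoly.roots :=
      (Polynomial.mem_roots (M.charpoly_monic.ne_zero)).2 hz
    rw [hr (φ J)] at hmem
    obtain ⟨i, -, hi⟩ := Multiset.mem_map.1 hmem
    refine Set.mem_iUnion.2 ⟨κ i, ?_⟩
    rw [← hi]
    exact (hballiff i (κ i)).2 rfl
  · -- multiplicities
    intro k
    have hsum : ∑ μ ∈ M.charpoly.roots.toFinset.filter (fun μ => μ ∈ Metric.ball (α k) η),
        M.charpoly.rootMultiplicity μ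
        = Multiset.card (M.charpoly.roots.filter (fun μ => μ ∈ Metric.ball (α k) η)) := by
      rw [← sum_count_filter']
      apply Finset.sum_congr rfl
      intro a _
      exact (Polynomial.count_roots _).symm
    rw [hsum, hr (φ J)]
    rw [Multiset.filter_map, Multiset.card_map]
    have hRHS : M₀.charpoly.rootMultiplicity (α k)
        = Multiset.card (Finset.univ.val.filter (fun i : Fin n => α k = rL i)) := by
      rw [← Polynomial.count_roots, hproots, Multiset.count_map]
    rw [hRHS]
    congr 1
    apply Multiset.filter_congr
    intro i _
    rw [show ((fun μ => μ ∈ Metric.ball (α k) η) ∘ rr) i = (rr i ∈ Metric.ball (α k) η) from rfl,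
      hballiff i k]
    constructor
    · intro h; rw [← h, hκ i]
    · intro h; exact hinj (by rw [hκ i, ← h])

end Aux

/-- Continuity of the spectrum: near `t₀` the eigenvalues of `𝒜(t)` stay in small balls around
the distinct eigenvalues `α₁, …, α_p` of `𝒜(t₀)`, and the total algebraic multiplicity inside
each ball is preserved. -/
theorem spectrum_continuity {E : Type*} [TopologicalSpace E] {n p : ℕ}
    (𝒜 : E → Matrix (Fin n) (Fin n) ℂ) (hA : Continuous 𝒜) (t₀ : E)
    (α : Fin p → ℂ) (hinj : Function.Injective α)
    (hspec : spectrum ℂ (𝒜 t₀) = Set.range α)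
    (η : ℝ) (hη : 0 < η) (hη' : ∀ i j : Fin p, i ≠ j → η < ‖α i - α j‖ / 2) :
    ∃ V ∈ nhds t₀, ∀ t ∈ V,
      (spectrum ℂ (𝒜 t) ⊆ ⋃ k : Fin p, Metric.ball (α k) η) ∧
      ∀ k : Fin p,
        ∑ μ ∈ (𝒜 t).charpoly.roots.toFinset.filter (fun μ => μ ∈ Metric.ball (α k) η),
          (𝒜 t).charpoly.rootMultiplicity μ =
        (𝒜 t₀).charpoly.rootMultiplicity (α k) := by
  have hkey := key (𝒜 t₀) α hinj hspec η hη hη'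
  have hev := (hA.continuousAt (x := t₀)).eventually hkey
  exact Filter.eventually_iff_exists_mem.mp hev
end
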